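/- With b_k = (-α)^k a_k, where a_0 = 1 and a_k = -(e^α/α)·Σ_{j=0}^{k-1} a_j/(k-j-1)!, the generating function of (b_k) equals B(z) = 1/(1 - z·e^{α(1-z)}). -/

import Mathlib

theorem generating_function_b (α : ℝ) (hα : 0 < α) (a b : ℕ → ℝ)
    (ha0 : a 0 = 1)
    (ha : ∀ k : ℕ, 1 ≤ k →
      a k = -(Real.exp α / α) * ∑ j ∈ Finset.range k, a j / (Nat.factorial (k - j - 1)))
    (hb : ∀ k, b k = (-α) ^ k * a k) :
    PowerSeries.mk b *
      (1 - PowerSeries.C (R := ℝ) (Real.exp α) * PowerSeries.X *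
        PowerSeries.rescale (-α) (PowerSeries.exp ℝ)) = 1 := by
  have hE : ∀ n : ℕ, PowerSeries.coeff (R := ℝ) n (PowerSeries.rescale (-α) (PowerSeries.exp ℝ))
      = (-α) ^ n / n.factorial := by
    intro n
    rw [PowerSeries.coeff_rescale, PowerSeries.coeff_exp]
    push_cast
    ring
  have key : PowerSeries.mk b *
      (PowerSeries.C (R := ℝ) (Real.exp α) * PowerSeries.X *
        PowerSeries.rescale (-α) (PowerSeries.exp ℝ)) =
      PowerSeries.C (R := ℝ) (Real.exp α) * (PowerSeries.X *
        (PowerSeries.rescale (-α) (PowerSeries.exp ℝ) * PowerSeries.mk b)) := by ring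
  rw [mul_sub, mul_one, key]
  ext n
  rcases n with _ | n
  · simp [ha0, hb]
  · rw [map_sub, PowerSeries.coeff_mk, PowerSeries.coeff_C_mul,
      PowerSeries.coeff_succ_X_mul, PowerSeries.coeff_mul]
    rw [Finset.Nat.sum_antidiagonal_eq_sum_range_succ_mk]
    have hsum : ∀ k ∈ Finset.range (n + 1),
        PowerSeries.coeff (R := ℝ) k (PowerSeries.rescale (-α) (PowerSeries.exp ℝ)) *
          PowerSeries.coeff (R := ℝ) (n - k) (PowerSeries.mk b)
        = (-α) ^ n * (a (n - k) / (Nat.factorial ((n + 1) - (n-k) - 1))) := by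
      intro k hk
      rw [Finset.mem_range] at hk
      rw [hE, PowerSeries.coeff_mk, hb]
      have h1 : n + 1 - (n - k) - 1 = k := by omega
      rw [h1]
      have h2 : (-α) ^ k * (-α) ^ (n - k) = (-α) ^ n := by
        rw [← pow_add]; congr 1; omega
      rw [← h2]
      ring
    rw [Finset.sum_congr rfl hsum, ← Finset.mul_sum]
    have hre : ∑ k ∈ Finset.range (n + 1), a (n - k) / (Nat.factorial ((n + 1) - (n - k) - 1))
        = ∑ j ∈ Finset.range (n + 1), a j / (Nat.factorial ((n + 1) - j - 1)) :=
      Finset.sum_range_reflect (fun j => a j / (Nat.factorial ((n + 1) - j - 1))) (n + 1)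
    rw [hre, hb (n + 1), ha (n + 1) (by omega), PowerSeries.coeff_one]
    simp only [Nat.succ_ne_zero, if_false]
    have hαne : α ≠ 0 := ne_of_gt hα
    have hp : (-α) ^ (n + 1) = (-α) ^ n * (-α) := pow_succ _ _
    rw [hp]
    field_simp
    ring
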